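/- Let T and T' be the two 8-leaf gadget trees on leaf set {a_i, a_j, a_k, c^1, c^2, c^3, c^4, d} used in the reduction (the top-right and bottom-right trees of the triple gadget). Then every ordering of the leaves that is a cherry-picking sequence for {T, T'} satisfies either a_i < a_j < a_k or a_j < a_k < a_i. -/

import Mathlib

/-- A rooted binary tree with labeled leaves. -/
inductive PhyloTree (α : Type) where
  | leaf (a : α) : PhyloTree α
  | node (l r : PhyloTree α) : PhyloTree α
deriving DecidableEq

namespace PhyloTree

variable {α : Type} [DecidableEq α]

/-- The list of leaf labels, left to right. -/
def leafList : PhyloTree α → List α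
  | leaf a => [a]
  | node l r => leafList l ++ leafList r

/-- A tree is a (valid) phylogenetic tree if its leaf labels are pairwise distinct. -/
def Phylo (T : PhyloTree α) : Prop := T.leafList.Nodup

/-- `{a,b}` is a cherry of `T`: `a` and `b` are leaves adjacent to a common parent. -/
def HasCherry : PhyloTree α → α → α → Prop
  | leaf _, _, _ => False
  | node (leaf x) (leaf y), a, b => (a = x ∧ b = y) ∨ (a = y ∧ b = x)
  | node l r, a, b => HasCherry l a b ∨ HasCherry r a b

/-- `a` is a leaf of a cherry of `T`. -/
def IsCherryLeaf (T : PhyloTree α) (a : α) : Prop := ∃ b, HasCherry T a b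

/-- The number of cherries of `T`. -/
def numCherries : PhyloTree α → ℕ
  | leaf _ => 0
  | node (leaf _) (leaf _) => 1
  | node l r => numCherries l + numCherries r

/-- Delete the leaf labeled `a` and suppress the resulting degree-2 vertex. -/
def delete : PhyloTree α → α → PhyloTree α
  | leaf b, _ => leaf b
  | node l r, a =>
    if l = leaf a then r
    else if r = leaf a then l
    else node (delete l a) (delete r a)

/-- Delete a list of leaves in order. -/
def deleteAll (T : PhyloTree α) (xs : List α) : PhyloTree α := xs.foldl delete T

/-- `(x_1,…,x_n)` is a cherry-picking sequence for the collection `P`: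
each `x_i` except possibly the last labels a leaf of a cherry in every tree of
`P` after the deletion of `x_1,…,x_{i-1}`. -/
def IsCPS (P : List (PhyloTree α)) (xs : List α) : Prop :=
  ∀ T ∈ P, ∀ i : Fin xs.length, (i : ℕ) < xs.length - 1 →
    IsCherryLeaf (deleteAll T (xs.take i)) (xs.get i)

/-- The collection `P` of trees (on a common leaf set) has a cherry-picking sequence. -/
def HasCPS (P : List (PhyloTree α)) : Prop :=
  ∃ xs : List α, (∀ T ∈ P, xs.Perm T.leafList) ∧ IsCPS P xs

/-- The caterpillar `(a, b, c_1, …, c_k)` with cherry `{a,b}`. -/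
def caterpillar (a b : α) (cs : List α) : PhyloTree α :=
  cs.foldl (fun t c => node t (leaf c)) (node (leaf a) (leaf b))

/-- Number of leaves. -/
def numLeaves : PhyloTree α → ℕ
  | leaf _ => 1
  | node l r => numLeaves l + numLeaves r

/-- Number of vertices. -/
def numVertices : PhyloTree α → ℕ
  | leaf _ => 1
  | node l r => numVertices l + numVertices r + 1

end PhyloTree

namespace PhyloTree

variable {α : Type} [DecidableEq α]

/-- The first (top-right) 8-leaf gadget tree for a triple `(a_i,a_j,a_k)`,
on leaf set `{a_i,a_j,a_k,c¹,c²,c³,c⁴,d}`. -/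
def tripleGadget (ai aj ak c1 c2 c3 c4 d : α) : PhyloTree α :=
  node
    (node (node (node (leaf ai) (leaf aj)) (node (leaf ak) (leaf c2))) (leaf c4))
    (node (node (leaf c1) (leaf c3)) (leaf d))

/-- The second (bottom-right) 8-leaf gadget tree for a triple `(a_i,a_j,a_k)`,
on leaf set `{a_i,a_j,a_k,c¹,c²,c³,c⁴,d}`. -/
def tripleGadget' (ai aj ak c1 c2 c3 c4 d : α) : PhyloTree α :=
  node
    (node (node (node (leaf ai) (leaf c3)) (leaf c2))
      (node (node (leaf aj) (leaf c4)) (leaf ak)))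
    (node (leaf c1) (leaf d))

end PhyloTree

namespace PhyloTree
variable {α : Type} [DecidableEq α]

def hasCherryB : PhyloTree α → α → α → Bool
  | leaf _, _, _ => false
  | node (leaf x) (leaf y), a, b => (a = x && b = y) || (a = y && b = x)
  | node l r, a, b => hasCherryB l a b || hasCherryB r a b

theorem hasCherry_iff : ∀ (T : PhyloTree α) (a b : α),
    HasCherry T a b ↔ hasCherryB T a b = true
  | leaf _, a, b => by simp [HasCherry, hasCherryB]
  | node (leaf x) (leaf y), a, b => by simp [HasCherry, hasCherryB]
  | node (leaf x) (node rl rr), a, b => by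
      rw [show HasCherry (node (leaf x) (node rl rr)) a b =
        (HasCherry (leaf x) a b ∨ HasCherry (node rl rr) a b) from rfl,
        show hasCherryB (node (leaf x) (node rl rr)) a b =
        (hasCherryB (leaf x) a b || hasCherryB (node rl rr) a b) from rfl]
      simp [hasCherry_iff (leaf x) a b, hasCherry_iff (node rl rr) a b]
  | node (node ll lr) r, a, b => by
      rw [show HasCherry (node (node ll lr) r) a b =
        (HasCherry (node ll lr) a b ∨ HasCherry r a b) from rfl,
        show hasCherryB (node (node ll lr) r) a b =
        (hasCherryB (node ll lr) a b || hasCherryB r a b) from rfl]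
      simp [hasCherry_iff (node ll lr) a b, hasCherry_iff r a b]

theorem hasCherry_mem_leafList : ∀ (T : PhyloTree α) (a b : α),
    HasCherry T a b → b ∈ leafList T
  | leaf _, a, b => by simp [HasCherry]
  | node (leaf x) (leaf y), a, b => by
      simp [HasCherry, leafList]; tauto
  | node (leaf x) (node rl rr), a, b => by
      rw [show HasCherry (node (leaf x) (node rl rr)) a b =
        (HasCherry (leaf x) a b ∨ HasCherry (node rl rr) a b) from rfl]
      rintro (h | h)
      · exact absurd h (by simp [HasCherry])
      · simp [leafList]
        exact Or.inr (by simpa [leafList] using hasCherry_mem_leafList _ a b h)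
  | node (node ll lr) r, a, b => by
      rw [show HasCherry (node (node ll lr) r) a b =
        (HasCherry (node ll lr) a b ∨ HasCherry r a b) from rfl]
      rintro (h | h) <;>
        have := hasCherry_mem_leafList _ a b h <;>
        simp [leafList] at this ⊢ <;> tauto



def isCherryLeafB (T : PhyloTree (Fin 8)) (a : Fin 8) : Bool :=
  (List.finRange 8).any (hasCherryB T a)

theorem isCherryLeaf_toB {T : PhyloTree (Fin 8)} {a : Fin 8} :
    IsCherryLeaf T a → isCherryLeafB T a = true := by
  rintro ⟨b, hb⟩
  simp only [isCherryLeafB, List.any_eq_true]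
  exact ⟨b, List.mem_finRange b, (hasCherry_iff T a b).mp hb⟩

def cpsCheck : List (PhyloTree (Fin 8)) → List (Fin 8) → Bool
  | _, [] => true
  | _, [_] => true
  | P, x :: y :: rest =>
      P.all (fun T => isCherryLeafB T x) && cpsCheck (P.map (delete · x)) (y :: rest)

theorem isCPS_tail {P : List (PhyloTree (Fin 8))} {x : Fin 8} {rest : List (Fin 8)}
    (h : IsCPS P (x :: rest)) : IsCPS (P.map (delete · x)) rest := by
  intro T hT i hi
  simp only [List.mem_map] at hT
  obtain ⟨S, hS, rfl⟩ := hT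
  have h1 := i.isLt
  have := h S hS ⟨i + 1, by simp only [List.length_cons]; omega⟩
    (by simp only [List.length_cons]; omega)
  simpa [deleteAll, List.take_succ_cons] using this

theorem isCPS_cpsCheck : ∀ (xs : List (Fin 8)) (P : List (PhyloTree (Fin 8))),
    IsCPS P xs → cpsCheck P xs = true
  | [], _, _ => rfl
  | [_], _, _ => rfl
  | x :: y :: rest, P, h => by
      rw [cpsCheck, Bool.and_eq_true]
      constructor
      · rw [List.all_eq_true]
        intro T hT
        have h0 := h T hT ⟨0, by simp only [List.length_cons]; omega⟩
          (by simp only [List.length_cons]; omega)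
        exact isCherryLeaf_toB (by simpa [deleteAll] using h0)
      · exact isCPS_cpsCheck (y :: rest) _ (isCPS_tail h)

def condB (ys : List (Fin 8)) : Bool :=
  (decide (ys.idxOf 0 < ys.idxOf 1) && decide (ys.idxOf 1 < ys.idxOf 2)) ||
  (decide (ys.idxOf 1 < ys.idxOf 2) && decide (ys.idxOf 2 < ys.idxOf 0))

def dfs : Nat → List (PhyloTree (Fin 8)) → List (Fin 8) → List (Fin 8) → Bool
  | _, _, acc, [] => condB acc
  | 0, _, _, _ :: _ => false
  | fuel + 1, P, acc, rem@(_ :: _) =>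
      rem.all fun x =>
        if rem.length == 1 || P.all (fun T => isCherryLeafB T x) then
          dfs fuel (P.map (delete · x)) (acc ++ [x]) (rem.erase x)
        else true

theorem dfs_sound : ∀ (fuel : Nat) (rem : List (Fin 8)) (P : List (PhyloTree (Fin 8)))
    (acc : List (Fin 8)), rem.length ≤ fuel → dfs fuel P acc rem = true →
    ∀ zs, zs.Perm rem → cpsCheck P zs = true → condB (acc ++ zs) = true := by
  intro fuel
  induction fuel with
  | zero =>
    intro rem P acc hlen hdfs zs hperm hcps
    obtain rfl := List.length_eq_zero_iff.mp (Nat.le_zero.mp hlen)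
    rw [List.perm_nil.mp hperm]
    simpa [dfs] using hdfs
  | succ n ih =>
    intro rem P acc hlen hdfs zs hperm hcps
    match rem, zs with
    | [], zs =>
      rw [List.perm_nil.mp hperm]
      simpa [dfs] using hdfs
    | r :: rs, [] => exact absurd hperm.symm (by simp)
    | r :: rs, z :: zs' =>
      rw [dfs, List.all_eq_true] at hdfs
      have hz : z ∈ r :: rs := hperm.mem_iff.mp (by simp)
      have hcond : ((r :: rs).length == 1 || P.all (fun T => isCherryLeafB T z)) = true := by
        match zs' with
        | [] => simp [hperm.length_eq.symm ▸ (by rfl : ([z] : List (Fin 8)).length = 1)]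
        | w :: ws =>
          rw [cpsCheck, Bool.and_eq_true] at hcps
          simp [hcps.1]
      have hdfs' := hdfs z hz
      rw [if_pos hcond] at hdfs'
      have hperm' : zs'.Perm ((r :: rs).erase z) := by
        have := hperm.erase z
        simpa using this
      have hcps' : cpsCheck (P.map (delete · z)) zs' = true := by
        match zs' with
        | [] => rfl
        | w :: ws => rw [cpsCheck, Bool.and_eq_true] at hcps; exact hcps.2
      have hlen' : ((r :: rs).erase z).length ≤ n := by
        rw [List.length_erase_of_mem hz]; simpa using Nat.lt_succ_iff.mp hlen
      have := ih _ _ _ hlen' hdfs' zs' hperm' hcps'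
      simpa using this

def GFin : PhyloTree (Fin 8) :=
  node
    (node (node (node (leaf 0) (leaf 1)) (node (leaf 2) (leaf 4))) (leaf 6))
    (node (node (leaf 3) (leaf 5)) (leaf 7))

def GFin' : PhyloTree (Fin 8) :=
  node
    (node (node (node (leaf 0) (leaf 5)) (leaf 4))
      (node (node (leaf 1) (leaf 6)) (leaf 2)))
    (node (leaf 3) (leaf 7))

def L8 : List (Fin 8) := [0, 1, 2, 3, 4, 5, 6, 7]

theorem dfs_true : dfs 8 [GFin, GFin'] [] L8 = true := by decide +kernel

theorem fin_main (ys : List (Fin 8)) (hperm : ys.Perm L8)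
    (hcps : IsCPS [GFin, GFin'] ys) :
    (ys.idxOf 0 < ys.idxOf 1 ∧ ys.idxOf 1 < ys.idxOf 2) ∨
    (ys.idxOf 1 < ys.idxOf 2 ∧ ys.idxOf 2 < ys.idxOf 0) := by
  have := dfs_sound 8 L8 [GFin, GFin'] [] (by rfl) dfs_true ys hperm
    (isCPS_cpsCheck ys _ hcps)
  simpa [condB] using this


variable {β γ : Type} [DecidableEq β] [DecidableEq γ]

def emap (f : β → γ) : PhyloTree β → PhyloTree γ
  | leaf a => leaf (f a)
  | node l r => node (emap f l) (emap f r)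

theorem emap_eq_leaf_iff {f : β → γ} (hf : Function.Injective f)
    (t : PhyloTree β) (a : β) : emap f t = leaf (f a) ↔ t = leaf a := by
  cases t <;> simp [emap, hf.eq_iff]

theorem delete_emap {f : β → γ} (hf : Function.Injective f) :
    ∀ (t : PhyloTree β) (a : β), delete (emap f t) (f a) = emap f (delete t a)
  | leaf _, _ => rfl
  | node l r, a => by
      rw [show emap f (node l r) = node (emap f l) (emap f r) from rfl, delete, delete]
      simp only [emap_eq_leaf_iff hf]
      split_ifs <;> simp [emap, delete_emap hf l a, delete_emap hf r a]

theorem deleteAll_emap {f : β → γ} (hf : Function.Injective f) :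
    ∀ (zs : List β) (t : PhyloTree β),
      deleteAll (emap f t) (zs.map f) = emap f (deleteAll t zs)
  | [], _ => rfl
  | z :: zs, t => by
      simp only [deleteAll, List.map_cons, List.foldl_cons, delete_emap hf]
      exact deleteAll_emap hf zs (delete t z)

theorem leafList_emap (f : β → γ) : ∀ t : PhyloTree β,
    leafList (emap f t) = (leafList t).map f
  | leaf _ => rfl
  | node l r => by simp [emap, leafList, leafList_emap f l, leafList_emap f r]

theorem hasCherry_emap {f : β → γ} (hf : Function.Injective f) :
    ∀ (t : PhyloTree β) (a b : β), HasCherry (emap f t) (f a) (f b) → HasCherry t a b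
  | leaf _, a, b => by simp [emap, HasCherry]
  | node (leaf x) (leaf y), a, b => by
      simp [emap, HasCherry, hf.eq_iff]
  | node (leaf x) (node rl rr), a, b => by
      rw [show emap f (node (leaf x) (node rl rr)) =
          node (leaf (f x)) (node (emap f rl) (emap f rr)) from rfl]
      rw [show HasCherry (node (leaf (f x)) (node (emap f rl) (emap f rr))) (f a) (f b) =
          (HasCherry (leaf (f x)) (f a) (f b) ∨
           HasCherry (node (emap f rl) (emap f rr)) (f a) (f b)) from rfl]
      rw [show HasCherry (node (leaf x) (node rl rr)) a b =
          (HasCherry (leaf x) a b ∨ HasCherry (node rl rr) a b) from rfl]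
      rintro (h | h)
      · exact absurd h (by simp [HasCherry])
      · exact Or.inr (hasCherry_emap hf (node rl rr) a b h)
  | node (node ll lr) r, a, b => by
      rw [show emap f (node (node ll lr) r) =
          node (node (emap f ll) (emap f lr)) (emap f r) from rfl]
      rw [show HasCherry (node (node (emap f ll) (emap f lr)) (emap f r)) (f a) (f b) =
          (HasCherry (node (emap f ll) (emap f lr)) (f a) (f b) ∨
           HasCherry (emap f r) (f a) (f b)) from rfl]
      rw [show HasCherry (node (node ll lr) r) a b =
          (HasCherry (node ll lr) a b ∨ HasCherry r a b) from rfl]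
      rintro (h | h)
      · exact Or.inl (hasCherry_emap hf (node ll lr) a b h)
      · exact Or.inr (hasCherry_emap hf r a b h)

theorem isCherryLeaf_emap {f : β → γ} (hf : Function.Injective f)
    {t : PhyloTree β} {a : β} (h : IsCherryLeaf (emap f t) (f a)) :
    IsCherryLeaf t a := by
  obtain ⟨b', hb'⟩ := h
  have hmem : b' ∈ leafList (emap f t) := hasCherry_mem_leafList _ _ _ hb'
  rw [leafList_emap] at hmem
  obtain ⟨b, _, rfl⟩ := List.mem_map.mp hmem
  exact ⟨b, hasCherry_emap hf t a b hb'⟩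

theorem isCPS_emap {f : β → γ} (hf : Function.Injective f)
    {P : List (PhyloTree β)} {ys : List β}
    (h : IsCPS (P.map (emap f)) (ys.map f)) : IsCPS P ys := by
  intro T hT i hi
  have := h (emap f T) (List.mem_map_of_mem hT)
    ⟨i, by simpa using i.isLt⟩ (by simpa using hi)
  simp only [List.get_eq_getElem, List.getElem_map] at this ⊢
  rw [show List.take (i : ℕ) (List.map f ys) = List.map f (List.take (i : ℕ) ys) from
      (List.map_take).symm, deleteAll_emap hf] at this
  exact isCherryLeaf_emap hf this

theorem indexOf_map {f : β → γ} (hf : Function.Injective f) :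
    ∀ (l : List β) (a : β), (l.map f).idxOf (f a) = l.idxOf a
  | [], _ => rfl
  | b :: l, a => by
      simp only [List.map_cons, List.idxOf_cons]
      have hd : (f b == f a) = (b == a) := by
        simp only [beq_eq_decide]
        exact decide_eq_decide.mpr hf.eq_iff
      rw [hd, indexOf_map hf l a]


end PhyloTree

open PhyloTree in
/-- Every ordering of the eight leaves that is a cherry-picking sequence for
both triple-gadget trees satisfies `a_i < a_j < a_k` or `a_j < a_k < a_i`. -/
theorem tripleGadget_forces_order {α : Type} [DecidableEq α]
    (ai aj ak c1 c2 c3 c4 d : α)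
    (hnd : ([ai, aj, ak, c1, c2, c3, c4, d] : List α).Nodup)
    (xs : List α) (hperm : xs.Perm [ai, aj, ak, c1, c2, c3, c4, d])
    (hcps : IsCPS [tripleGadget ai aj ak c1 c2 c3 c4 d,
        tripleGadget' ai aj ak c1 c2 c3 c4 d] xs) :
    (xs.idxOf ai < xs.idxOf aj ∧ xs.idxOf aj < xs.idxOf ak) ∨
    (xs.idxOf aj < xs.idxOf ak ∧ xs.idxOf ak < xs.idxOf ai) := by
  set L : List α := [ai, aj, ak, c1, c2, c3, c4, d] with hL
  have hlen : L.length = 8 := rfl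
  set g : Fin 8 → α := fun i => L.get (Fin.cast hlen.symm i) with hg
  have hginj : Function.Injective g := by
    intro i j hij
    have := (List.nodup_iff_injective_get.mp hnd) hij
    simpa [Fin.ext_iff] using this
  -- every element of L is in the range of g
  have hrange : ∀ x ∈ L, ∃ i : Fin 8, g i = x := by
    intro x hx
    obtain ⟨k, hk⟩ := List.get_of_mem hx
    exact ⟨Fin.cast hlen k, hk⟩
  classical
  set f : α → Fin 8 := fun x => if h : ∃ i : Fin 8, g i = x then h.choose else 0 with hf
  have hfg : ∀ i : Fin 8, f (g i) = i := by
    intro i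
    have h : ∃ j : Fin 8, g j = g i := ⟨i, rfl⟩
    simp only [hf, dif_pos h]
    exact hginj h.choose_spec
  have hgf : ∀ x ∈ L, g (f x) = x := by
    intro x hx
    have h := hrange x hx
    simp only [hf, dif_pos h]
    exact h.choose_spec
  set ys : List (Fin 8) := xs.map f with hys
  have hxsys : ys.map g = xs := by
    rw [hys, List.map_map]
    have hcg : ∀ x ∈ xs, (g ∘ f) x = id x := fun x hx => hgf x (hperm.mem_iff.mp hx)
    rw [List.map_congr_left hcg, List.map_id]
  have hLg : L = L8.map g := rfl
  have hysperm : ys.Perm L8 := by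
    have hpm := hperm.map f
    rw [hLg, List.map_map] at hpm
    have h2 : List.map (f ∘ g) L8 = L8 := by
      have h3 : List.map (f ∘ g) L8 = List.map id L8 :=
        List.map_congr_left (fun i _ => hfg i)
      rw [h3, List.map_id]
    rw [h2] at hpm
    exact hys ▸ hpm
  have hG : tripleGadget ai aj ak c1 c2 c3 c4 d = emap g GFin := rfl
  have hG' : tripleGadget' ai aj ak c1 c2 c3 c4 d = emap g GFin' := rfl
  have hcps2 : IsCPS [GFin, GFin'] ys := by
    apply isCPS_emap hginj
    rw [show [GFin, GFin'].map (emap g) = [emap g GFin, emap g GFin'] from rfl, hxsys,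
      ← hG, ← hG']
    exact hcps
  have hmain := fin_main ys hysperm hcps2
  have hidx : ∀ i : Fin 8, xs.idxOf (g i) = ys.idxOf i := by
    intro i
    rw [← hxsys, indexOf_map hginj]
  rw [← show g 0 = ai from rfl, ← show g 1 = aj from rfl, ← show g 2 = ak from rfl,
    hidx 0, hidx 1, hidx 2]
  exact hmain
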